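/- Let m, n ≥ 1 and let B = {φ_x ⊗ χ_x}_{x∈X} be a finite family of product vectors in ℂ^m ⊗ ℂ^n with |X| ≥ m + n − 1. Assume that for every subset T ⊆ X with |T| = m the vectors {φ_x : x ∈ T} span ℂ^m, and for every subset T ⊆ X with |T| = n the vectors {χ_x : x ∈ T} span ℂ^n. Then no nonzero product vector lies in the orthogonal complement of span B; that is, if f ∈ ℂ^m and g ∈ ℂ^n satisfy ⟨φ_x ⊗ χ_x, f ⊗ g⟩ = 0 for all x ∈ X, then f ⊗ g = 0. -/

import Mathlib

open scoped InnerProductSpace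

noncomputable section

/-- The tensor product of `a ∈ ℂ^m` and `b ∈ ℂ^n`, realized as the vector in
`ℂ^m ⊗ ℂ^n ≅ ℂ^(m×n)` whose `(i,j)` coordinate is `a i * b j`. -/
def tensor {m n : ℕ} (a : EuclideanSpace ℂ (Fin m)) (b : EuclideanSpace ℂ (Fin n)) :
    EuclideanSpace ℂ (Fin m × Fin n) :=
  WithLp.toLp 2 (fun p : Fin m × Fin n => a p.1 * b p.2)

lemma tensor_inner {m n : ℕ} (a c : EuclideanSpace ℂ (Fin m))
    (b d : EuclideanSpace ℂ (Fin n)) :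
    ⟪tensor a b, tensor c d⟫_ℂ = ⟪a, c⟫_ℂ * ⟪b, d⟫_ℂ := by
  simp only [tensor, PiLp.inner_apply, RCLike.inner_apply]
  rw [Fintype.sum_prod_type, Finset.sum_mul_sum]
  refine Finset.sum_congr rfl fun i _ => Finset.sum_congr rfl fun j _ => ?_
  simp [map_mul]
  ring

/-- If `f` is orthogonal (in the sense `⟪φ x, f⟫ = 0`) to too many vectors of a family any `m`
of which span, then `f = 0`. -/
lemma zero_of_many_orth {m : ℕ} {X : Type} [Fintype X]
    (φ : X → EuclideanSpace ℂ (Fin m))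
    (hφ : ∀ T : Finset X, T.card = m → Submodule.span ℂ (φ '' ↑T) = ⊤)
    (f : EuclideanSpace ℂ (Fin m)) (S : Finset X)
    (hS : ∀ x ∈ S, ⟪φ x, f⟫_ℂ = 0) (hcard : m ≤ S.card) : f = 0 := by
  obtain ⟨T, hTS, hT⟩ := S.exists_subset_card_eq hcard
  have hspan := hφ T hT
  have hle : Submodule.span ℂ (φ '' ↑T) ≤ (ℂ ∙ f)ᗮ := by
    rw [Submodule.span_le]
    rintro _ ⟨x, hx, rfl⟩
    rw [SetLike.mem_coe, Submodule.mem_orthogonal_singleton_iff_inner_right]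
    rw [← inner_conj_symm, hS x (hTS hx), map_zero]
  rw [hspan, top_le_iff] at hle
  have hf : f ∈ (ℂ ∙ f)ᗮ := hle ▸ Submodule.mem_top
  have := Submodule.mem_orthogonal_singleton_iff_inner_right.mp hf
  exact inner_self_eq_zero.mp this

/-- If `B = {φ_x ⊗ χ_x}` is a family of product vectors in `ℂ^m ⊗ ℂ^n` with at
least `m + n - 1` members, such that every `m`-tuple of the `φ_x` spans `ℂ^m` and every `n`-tuple
of the `χ_x` spans `ℂ^n`, then no nonzero product vector is orthogonal to all members of `B`. -/
theorem stmt0 (m n : ℕ) (hm : 1 ≤ m) (hn : 1 ≤ n) (X : Type) [Fintype X]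
    (φ : X → EuclideanSpace ℂ (Fin m)) (χ : X → EuclideanSpace ℂ (Fin n))
    (hcard : m + n - 1 ≤ Fintype.card X)
    (hφ : ∀ T : Finset X, T.card = m → Submodule.span ℂ (φ '' ↑T) = ⊤)
    (hχ : ∀ T : Finset X, T.card = n → Submodule.span ℂ (χ '' ↑T) = ⊤)
    (f : EuclideanSpace ℂ (Fin m)) (g : EuclideanSpace ℂ (Fin n))
    (horth : ∀ x : X, ⟪tensor (φ x) (χ x), tensor f g⟫_ℂ = 0) :
    tensor f g = 0 := by
  by_cases hf : f = 0
  · ext p; simp [tensor, hf]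
  by_cases hg : g = 0
  · ext p; simp [tensor, hg]
  exfalso
  classical
  set S : Finset X := Finset.univ.filter (fun x => ⟪φ x, f⟫_ℂ = 0) with hSdef
  set T : Finset X := Finset.univ.filter (fun x => ⟪χ x, g⟫_ℂ = 0) with hTdef
  have hunion : S ∪ T = Finset.univ := by
    ext x
    simp only [Finset.mem_union, hSdef, hTdef, Finset.mem_filter, Finset.mem_univ, true_and,
      iff_true]
    have := horth x
    rw [tensor_inner] at this
    exact mul_eq_zero.mp this
  have hScard : S.card ≤ m - 1 := by
    by_contra h
    push_neg at h
    have : m ≤ S.card := by omega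
    exact hf (zero_of_many_orth φ hφ f S (fun x hx => (Finset.mem_filter.mp hx).2) this)
  have hTcard : T.card ≤ n - 1 := by
    by_contra h
    push_neg at h
    have : n ≤ T.card := by omega
    exact hg (zero_of_many_orth χ hχ g T (fun x hx => (Finset.mem_filter.mp hx).2) this)
  have := Finset.card_union_le S T
  rw [hunion, Finset.card_univ] at this
  omega
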